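/- Let s, t be finite index sets and consider the toric ideal I_B = ker(φ_B) where φ_B : K[z_{jk} : j ∈ s, k ∈ t] → K[x_j, y_k : j ∈ s, k ∈ t] sends z_{jk} ↦ x_j·y_k. Then I_B is generated by the 2×2-minors Quad_B = { z_{j₁k₁}z_{j₂k₂} − z_{j₂k₁}z_{j₁k₂} : j₁, j₂ ∈ s, k₁, k₂ ∈ t }; moreover Quad_B is a Gröbner basis of I_B with respect to any term order selecting z_{j₁k₁}z_{j₂k₂} (with j₁ < j₂, k₁ < k₂ in fixed linear orders) as leading terms, and the initial ideal is squarefree. -/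

import Mathlib

open MvPolynomial

/-- `m` is the leading monomial of `f` with respect to the monomial order `r`. -/
def IsLeadMon {K : Type} [CommRing K] {σ : Type} (r : (σ →₀ ℕ) → (σ →₀ ℕ) → Prop)
    (f : MvPolynomial σ K) (m : σ →₀ ℕ) : Prop :=
  m ∈ f.support ∧ ∀ m' ∈ f.support, m' ≠ m → r m' m

set_option linter.unusedSectionVars false
set_option linter.unusedVariables false

namespace Stmt7Aux

variable {s t : Type} [LinearOrder s] [LinearOrder t]

/-- The exponent map of the Segre monomial map. -/
noncomputable def F (m : (s × t) →₀ ℕ) : (s ⊕ t) →₀ ℕ :=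
  Finsupp.mapDomain (fun p => Sum.inl p.1) m + Finsupp.mapDomain (fun p => Sum.inr p.2) m

lemma F_add (m n : (s × t) →₀ ℕ) : F (m + n) = F m + F n := by
  simp only [F, Finsupp.mapDomain_add]; abel

lemma F_zero : F (0 : (s × t) →₀ ℕ) = 0 := by
  simp [F]

lemma F_single (p : s × t) (n : ℕ) :
    F (Finsupp.single p n) =
      Finsupp.single (Sum.inl p.1) n + Finsupp.single (Sum.inr p.2) n := by
  simp [F, Finsupp.mapDomain_single]

lemma deg_F (m : (s × t) →₀ ℕ) :
    (F m).sum (fun _ n => n) = m.sum (fun _ n => n) + m.sum (fun _ n => n) := by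
  rw [F, Finsupp.sum_add_index' (fun _ => rfl) (fun _ _ _ => rfl),
    Finsupp.sum_mapDomain_index (fun _ => rfl) (fun _ _ _ => rfl),
    Finsupp.sum_mapDomain_index (fun _ => rfl) (fun _ _ _ => rfl)]

lemma deg_eq_zero {m : (s × t) →₀ ℕ} (h : m.sum (fun _ n => n) = 0) : m = 0 := by
  rw [Finsupp.sum, Finset.sum_eq_zero_iff] at h
  exact Finsupp.support_eq_empty.1
    (Finset.eq_empty_of_forall_notMem fun p hp => (Finsupp.mem_support_iff.1 hp) (h p hp))

lemma F_apply_inl (m : (s × t) →₀ ℕ) (j : s) :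
    F m (Sum.inl j) = ∑ p ∈ m.support, if p.1 = j then m p else 0 := by
  classical
  rw [F, Finsupp.add_apply, Finsupp.mapDomain, Finsupp.mapDomain,
    Finsupp.sum_apply, Finsupp.sum_apply]
  rw [Finsupp.sum, Finsupp.sum]
  simp [Finsupp.single_apply]

lemma F_apply_inr (m : (s × t) →₀ ℕ) (k : t) :
    F m (Sum.inr k) = ∑ p ∈ m.support, if p.2 = k then m p else 0 := by
  classical
  rw [F, Finsupp.add_apply, Finsupp.mapDomain, Finsupp.mapDomain,
    Finsupp.sum_apply, Finsupp.sum_apply]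
  rw [Finsupp.sum, Finsupp.sum]
  simp [Finsupp.single_apply]

lemma F_inl_ne {m : (s × t) →₀ ℕ} {j : s} :
    F m (Sum.inl j) ≠ 0 ↔ j ∈ m.support.image Prod.fst := by
  classical
  rw [F_apply_inl]
  rw [Ne, Finset.sum_eq_zero_iff]
  push_neg
  constructor
  · rintro ⟨p, hp, hne⟩
    have : p.1 = j := by by_contra h; simp [h] at hne
    exact Finset.mem_image.2 ⟨p, hp, this⟩
  · rintro hj
    obtain ⟨p, hp, hpj⟩ := Finset.mem_image.1 hj
    exact ⟨p, hp, by simp [hpj, Finsupp.mem_support_iff.1 hp]⟩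

lemma F_inr_ne {m : (s × t) →₀ ℕ} {k : t} :
    F m (Sum.inr k) ≠ 0 ↔ k ∈ m.support.image Prod.snd := by
  classical
  rw [F_apply_inr]
  rw [Ne, Finset.sum_eq_zero_iff]
  push_neg
  constructor
  · rintro ⟨p, hp, hne⟩
    have : p.2 = k := by by_contra h; simp [h] at hne
    exact Finset.mem_image.2 ⟨p, hp, this⟩
  · rintro hk
    obtain ⟨p, hp, hpk⟩ := Finset.mem_image.1 hk
    exact ⟨p, hp, by simp [hpk, Finsupp.mem_support_iff.1 hp]⟩

/-- Standard (sorted) monomials: no strictly "diagonal" pair in the support. -/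
def Std (m : (s × t) →₀ ℕ) : Prop :=
  ∀ p ∈ m.support, ∀ q ∈ m.support, p.1 < q.1 → ¬ p.2 < q.2

lemma Std.mono {m m' : (s × t) →₀ ℕ} (h : m.support ⊆ m'.support) (hs : Std m') : Std m :=
  fun p hp q hq => hs p (h hp) q (h hq)

lemma corner {m : (s × t) →₀ ℕ} (hs : Std m) {j0 : s} {K0 : t}
    (hj : j0 ∈ m.support.image Prod.fst)
    (hjmin : ∀ j ∈ m.support.image Prod.fst, j0 ≤ j)
    (hK : K0 ∈ m.support.image Prod.snd)
    (hKmax : ∀ k ∈ m.support.image Prod.snd, k ≤ K0) :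
    (j0, K0) ∈ m.support := by
  obtain ⟨p, hp, hp1⟩ := Finset.mem_image.1 hj
  obtain ⟨q, hq, hq2⟩ := Finset.mem_image.1 hK
  have hle : j0 ≤ q.1 := hjmin q.1 (Finset.mem_image.2 ⟨q, hq, rfl⟩)
  rcases eq_or_lt_of_le hle with heq | hlt
  · have hq' : q = ((j0, K0) : s × t) := Prod.ext_iff.2 ⟨heq.symm, hq2⟩
    exact hq' ▸ hq
  · have h1 : ¬ p.2 < q.2 := hs p hp q hq (hp1 ▸ hlt)
    have h2 : p.2 ≤ K0 := hKmax p.2 (Finset.mem_image.2 ⟨p, hp, rfl⟩)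
    have hp' : p = ((j0, K0) : s × t) :=
      Prod.ext_iff.2 ⟨hp1, le_antisymm h2 (hq2 ▸ le_of_not_gt h1)⟩
    exact hp' ▸ hp

lemma F_inj : ∀ (d : ℕ) (m m' : (s × t) →₀ ℕ), m.sum (fun _ n => n) = d →
    Std m → Std m' → F m = F m' → m = m' := by
  intro d
  induction d with
  | zero =>
    intro m m' hd _ _ hF
    have hm : m = 0 := deg_eq_zero hd
    have : (F m').sum (fun _ n => n) = 0 := by rw [← hF, hm, F_zero]; simp
    rw [deg_F] at this
    have hm' : m' = 0 := deg_eq_zero (by omega)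
    rw [hm, hm']
  | succ d ih =>
    intro m m' hd hstd hstd' hF
    have hd' : m'.sum (fun _ n => n) = d + 1 := by
      have h1 := deg_F m
      have h2 := deg_F m'
      rw [hF] at h1; omega
    -- supports nonempty
    have hne : m.support.Nonempty := by
      rcases Finset.eq_empty_or_nonempty m.support with h | h
      · rw [Finsupp.support_eq_empty] at h; rw [h] at hd; simp at hd
      · exact h
    have hrows : m.support.image Prod.fst = m'.support.image Prod.fst := by
      ext j; rw [← F_inl_ne, ← F_inl_ne, hF]
    have hcols : m.support.image Prod.snd = m'.support.image Prod.snd := by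
      ext k; rw [← F_inr_ne, ← F_inr_ne, hF]
    have hrne : (m.support.image Prod.fst).Nonempty := hne.image _
    have hcne : (m.support.image Prod.snd).Nonempty := hne.image _
    set j0 := (m.support.image Prod.fst).min' hrne with hj0
    set K0 := (m.support.image Prod.snd).max' hcne with hK0
    have hc : (j0, K0) ∈ m.support :=
      corner hstd ((m.support.image Prod.fst).min'_mem hrne)
        (fun j hj => Finset.min'_le _ _ hj)
        ((m.support.image Prod.snd).max'_mem hcne)
        (fun k hk => Finset.le_max' _ _ hk)
    have hc' : (j0, K0) ∈ m'.support := by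
      apply corner hstd'
      · rw [← hrows]; exact Finset.min'_mem _ _
      · intro j hj; rw [← hrows] at hj; exact Finset.min'_le _ _ hj
      · rw [← hcols]; exact Finset.max'_mem _ _
      · intro k hk; rw [← hcols] at hk; exact Finset.le_max' _ _ hk
    -- subtract a unit at (j0, K0)
    have hle1 : Finsupp.single ((j0, K0) : s × t) 1 ≤ m :=
      Finsupp.single_le_iff.2 (Nat.one_le_iff_ne_zero.2 (Finsupp.mem_support_iff.1 hc))
    have hle1' : Finsupp.single ((j0, K0) : s × t) 1 ≤ m' :=
      Finsupp.single_le_iff.2 (Nat.one_le_iff_ne_zero.2 (Finsupp.mem_support_iff.1 hc'))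
    set m1 := m - Finsupp.single ((j0, K0) : s × t) 1 with hm1def
    set m1' := m' - Finsupp.single ((j0, K0) : s × t) 1 with hm1'def
    have hsum : m1 + Finsupp.single ((j0, K0) : s × t) 1 = m := tsub_add_cancel_of_le hle1
    have hsum' : m1' + Finsupp.single ((j0, K0) : s × t) 1 = m' := tsub_add_cancel_of_le hle1'
    have hsupp1 : m1.support ⊆ m.support := by
      intro p hp
      rw [Finsupp.mem_support_iff] at hp ⊢
      intro h0
      apply hp
      rw [hm1def, Finsupp.tsub_apply, h0]
      simp
    have hsupp1' : m1'.support ⊆ m'.support := by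
      intro p hp
      rw [Finsupp.mem_support_iff] at hp ⊢
      intro h0
      apply hp
      rw [hm1'def, Finsupp.tsub_apply, h0]
      simp
    have hF1 : F m1 = F m1' := by
      have e1 : F m1 + F (Finsupp.single ((j0, K0) : s × t) 1) = F m := by rw [← F_add, hsum]
      have e2 : F m1' + F (Finsupp.single ((j0, K0) : s × t) 1) = F m' := by rw [← F_add, hsum']
      have : F m1 + F (Finsupp.single ((j0, K0) : s × t) 1)
          = F m1' + F (Finsupp.single ((j0, K0) : s × t) 1) := by rw [e1, e2, hF]
      exact add_right_cancel this
    have hdeg1 : m1.sum (fun _ n => n) = d := by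
      have h2 : (m1 + Finsupp.single ((j0, K0) : s × t) 1).sum (fun _ n => n)
          = m1.sum (fun _ n => n) + (Finsupp.single ((j0, K0) : s × t) 1).sum (fun _ n => n) :=
        Finsupp.sum_add_index' (fun _ => rfl) (fun _ _ _ => rfl)
      have h3 : (Finsupp.single ((j0, K0) : s × t) 1).sum (fun (_ : s × t) (n : ℕ) => n) = 1 :=
        Finsupp.sum_single_index rfl
      rw [hsum, h3] at h2
      omega
    have := ih m1 m1' hdeg1 (hstd.mono hsupp1) (hstd'.mono hsupp1') hF1
    rw [← hsum, ← hsum', this]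

variable {K : Type} [Field K]

/-- The Segre monomial algebra map. -/
noncomputable def phi : MvPolynomial (s × t) K →ₐ[K] MvPolynomial (s ⊕ t) K :=
  aeval (fun x : s × t => X (Sum.inl x.1) * X (Sum.inr x.2))

lemma phi_monomial (m : (s × t) →₀ ℕ) (c : K) :
    phi (monomial m c) = monomial (F m) c := by
  induction m using Finsupp.induction with
  | zero => simp [phi, F_zero, aeval_monomial]
  | single_add p n f hpf hn ih =>
    have hsplit : (monomial (Finsupp.single p n + f) c : MvPolynomial (s × t) K)
        = monomial (Finsupp.single p n) 1 * monomial f c := by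
      rw [monomial_mul, one_mul]
    rw [hsplit, map_mul, ih]
    have h1 : phi (monomial (Finsupp.single p n) (1 : K))
        = monomial (Finsupp.single (Sum.inl p.1) n + Finsupp.single (Sum.inr p.2) n) 1 := by
      rw [phi, aeval_monomial]
      rw [Finsupp.prod_single_index (by simp)]
      rw [mul_pow, X_pow_eq_monomial, X_pow_eq_monomial, monomial_mul, one_mul]
      simp
    rw [h1, monomial_mul, one_mul, F_add, F_single]

lemma eq_zero_of_std {g : MvPolynomial (s × t) K} (hg : ∀ m ∈ g.support, Std m)
    (h0 : phi g = 0) : g = 0 := by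
  by_contra hne
  obtain ⟨m0, hm0⟩ : g.support.Nonempty := MvPolynomial.support_nonempty.2 hne
  have hrep : phi g = ∑ m ∈ g.support, monomial (F m) (coeff m g) := by
    conv_lhs => rw [← MvPolynomial.support_sum_monomial_coeff g]
    rw [map_sum]
    exact Finset.sum_congr rfl fun m _ => phi_monomial m _
  have hc := congrArg (coeff (F m0)) hrep
  rw [h0, coeff_zero, MvPolynomial.coeff_sum] at hc
  have hsum : ∑ m ∈ g.support, coeff (F m0) (monomial (F m) (coeff m g)) = coeff m0 g := by
    rw [Finset.sum_eq_single m0]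
    · rw [MvPolynomial.coeff_monomial, if_pos rfl]
    · intro b hb hbne
      rw [MvPolynomial.coeff_monomial, if_neg]
      intro hFb
      exact hbne (F_inj (b.sum fun _ n => n) b m0 rfl (hg b hb) (hg m0 hm0) hFb)
    · intro h; exact absurd hm0 h
  rw [hsum] at hc
  exact (Finsupp.mem_support_iff.1 hm0) hc.symm

lemma quad_ker (j₁ j₂ : s) (k₁ k₂ : t) :
    phi ((X (j₁, k₁) * X (j₂, k₂) - X (j₂, k₁) * X (j₁, k₂) : MvPolynomial (s × t) K)) = 0 := by
  simp only [phi, map_sub, map_mul, aeval_X]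
  ring

def QuadSet : Set (MvPolynomial (s × t) K) :=
  {f | ∃ (j₁ j₂ : s) (k₁ k₂ : t),
    f = X (j₁, k₁) * X (j₂, k₂) - X (j₂, k₁) * X (j₁, k₂)}

lemma X_mul_X (u v : s × t) :
    (X u * X v : MvPolynomial (s × t) K)
      = monomial (Finsupp.single u 1 + Finsupp.single v 1) 1 := by
  have hu : (X u : MvPolynomial (s × t) K) = monomial (Finsupp.single u 1) 1 := rfl
  have hv : (X v : MvPolynomial (s × t) K) = monomial (Finsupp.single v 1) 1 := rfl
  rw [hu, hv, monomial_mul, one_mul]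

lemma fiber_finite (B : Finset (s × t)) (v : (s ⊕ t) →₀ ℕ) :
    {x : (s × t) →₀ ℕ | x.support ⊆ B ∧ F x = v}.Finite := by
  classical
  set D := v.sum fun _ n => n with hD
  set u : (s × t) →₀ ℕ := B.sum fun b => Finsupp.single b D with hu
  apply Set.Finite.subset (Set.finite_Iic u)
  rintro x ⟨hsupp, hFx⟩
  have huapp : ∀ p, u p = if p ∈ B then D else 0 := by
    intro p
    rw [hu, Finset.sum_apply']
    simp [Finsupp.single_apply]
  have hdx : ∀ p, x p ≤ D := by
    intro p
    by_cases hp : p ∈ x.support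
    · have h1 : x p ≤ x.sum fun _ n => n := by
        rw [Finsupp.sum]
        exact Finset.single_le_sum (f := fun q => x q) (fun _ _ => Nat.zero_le _) hp
      have h2 : (F x).sum (fun _ n => n) = D := by rw [hFx]
      have h3 := deg_F x
      omega
    · simp [Finsupp.notMem_support_iff.1 hp]
  rw [Set.mem_Iic]
  refine Finsupp.le_def.2 fun p => ?_
  rw [huapp p]
  by_cases hp : p ∈ B
  · simpa [hp] using hdx p
  · have : p ∉ x.support := fun h => hp (hsupp h)
    simp [hp, Finsupp.notMem_support_iff.1 this]

section Reduction

variable (r : ((s × t) →₀ ℕ) → ((s × t) →₀ ℕ) → Prop)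
  (hord : IsStrictTotalOrder ((s × t) →₀ ℕ) r)
  (hadd : ∀ a b c, r a b → r (a + c) (b + c))
  (hsel : ∀ (j₁ j₂ : s) (k₁ k₂ : t), j₁ < j₂ → k₁ < k₂ →
    r (Finsupp.single (j₂, k₁) 1 + Finsupp.single (j₁, k₂) 1)
      (Finsupp.single (j₁, k₁) 1 + Finsupp.single (j₂, k₂) 1))

/-- measure for the reduction -/
noncomputable def mu (B : Finset (s × t)) (m : (s × t) →₀ ℕ) : ℕ :=
  {x : (s × t) →₀ ℕ | x.support ⊆ B ∧ F x = F m ∧ r x m}.ncard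

include hord hadd hsel in
lemma red_step (B : Finset (s × t))
    (hB : ∀ x ∈ B, ∀ y ∈ B, ((x.1, y.2) : s × t) ∈ B)
    {m : (s × t) →₀ ℕ} (hsupp : m.support ⊆ B) (hm : ¬ Std m) :
    ∃ m'' : (s × t) →₀ ℕ, m''.support ⊆ B ∧ F m'' = F m ∧ r m'' m ∧
      mu r B m'' < mu r B m ∧
      ∀ c : K, (monomial m c - monomial m'' c : MvPolynomial (s × t) K)
        ∈ Ideal.span (QuadSet (K := K) (s := s) (t := t)) := by
  classical
  haveI := hord
  rw [Std] at hm
  push_neg at hm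
  obtain ⟨p, hp, q, hq, hpq1, hpq2⟩ := hm
  have hpne : p ≠ q := fun h => absurd (h ▸ hpq1) (lt_irrefl _)
  set a : (s × t) →₀ ℕ := Finsupp.single p 1 + Finsupp.single q 1 with hadef
  set dd : (s × t) →₀ ℕ :=
    Finsupp.single ((q.1, p.2) : s × t) 1 + Finsupp.single ((p.1, q.2) : s × t) 1 with hddef
  have ha : a ≤ m := by
    refine Finsupp.le_def.2 fun x => ?_
    rw [hadef, Finsupp.add_apply]
    by_cases hxp : x = p
    · subst hxp
      rw [Finsupp.single_eq_same, Finsupp.single_eq_of_ne' (Ne.symm hpne)]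
      exact Nat.one_le_iff_ne_zero.2 (Finsupp.mem_support_iff.1 hp)
    · by_cases hxq : x = q
      · subst hxq
        rw [Finsupp.single_eq_same, Finsupp.single_eq_of_ne' hpne]
        exact Nat.one_le_iff_ne_zero.2 (Finsupp.mem_support_iff.1 hq)
      · rw [Finsupp.single_eq_of_ne' (Ne.symm hxp), Finsupp.single_eq_of_ne' (Ne.symm hxq)]
        exact Nat.zero_le _
  have hACancel : m - a + a = m := tsub_add_cancel_of_le ha
  have hFad : F a = F dd := by
    rw [hadef, hddef, F_add, F_add, F_single, F_single, F_single, F_single]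
    abel
  set m'' : (s × t) →₀ ℕ := m - a + dd with hm''def
  have hsupp'' : m''.support ⊆ B := by
    intro x hx
    rcases Finset.mem_union.1 (Finsupp.support_add hx) with h | h
    · apply hsupp
      have hne : (m - a) x ≠ 0 := Finsupp.mem_support_iff.1 h
      rw [Finsupp.tsub_apply] at hne
      exact Finsupp.mem_support_iff.2 fun h0 => hne (by rw [h0]; simp)
    · rcases Finset.mem_union.1 (Finsupp.support_add h) with h' | h'
      · have hx' : x = ((q.1, p.2) : s × t) :=
          Finset.mem_singleton.1 (Finsupp.support_single_subset h')
        rw [hx']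
        exact hB q (hsupp hq) p (hsupp hp)
      · have hx' : x = ((p.1, q.2) : s × t) :=
          Finset.mem_singleton.1 (Finsupp.support_single_subset h')
        rw [hx']
        exact hB p (hsupp hp) q (hsupp hq)
  have hda : r dd a := hsel p.1 q.1 p.2 q.2 hpq1 hpq2
  have hr : r m'' m := by
    have h1 := hadd dd a (m - a) hda
    have e1 : dd + (m - a) = m'' := by rw [hm''def, add_comm]
    have e2 : a + (m - a) = m := by rw [add_comm, hACancel]
    rwa [e1, e2] at h1
  have hF'' : F m'' = F m := by
    rw [hm''def, F_add, ← hFad, ← F_add, hACancel]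
  have hfin : {x : (s × t) →₀ ℕ | x.support ⊆ B ∧ F x = F m ∧ r x m}.Finite :=
    (fiber_finite B (F m)).subset fun x hx => ⟨hx.1, hx.2.1⟩
  have hss : {x : (s × t) →₀ ℕ | x.support ⊆ B ∧ F x = F m'' ∧ r x m''}
      ⊂ {x : (s × t) →₀ ℕ | x.support ⊆ B ∧ F x = F m ∧ r x m} := by
    constructor
    · rintro x ⟨h1, h2, h3⟩
      exact ⟨h1, by rw [h2, hF''], trans_of r h3 hr⟩
    · intro hsub
      have hmem : m'' ∈ {x : (s × t) →₀ ℕ | x.support ⊆ B ∧ F x = F m ∧ r x m} :=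
        ⟨hsupp'', hF'', hr⟩
      exact irrefl_of r m'' (hsub hmem).2.2
  have hlt : mu r B m'' < mu r B m := by
    rw [mu, mu]
    exact Set.ncard_lt_ncard hss hfin
  refine ⟨m'', hsupp'', hF'', hr, hlt, fun c => ?_⟩
  have hquad : (monomial a 1 - monomial dd 1 : MvPolynomial (s × t) K)
      ∈ QuadSet (K := K) (s := s) (t := t) := by
    refine ⟨p.1, q.1, p.2, q.2, ?_⟩
    rw [X_mul_X, X_mul_X, hadef, hddef]
  have heq : (monomial m c - monomial m'' c : MvPolynomial (s × t) K)
      = monomial (m - a) c * (monomial a 1 - monomial dd 1) := by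
    rw [mul_sub, monomial_mul, monomial_mul, mul_one, hACancel, ← hm''def]
  rw [heq]
  exact Ideal.mul_mem_left _ _ (Ideal.subset_span hquad)

include hord hadd hsel in
lemma red_aux (B : Finset (s × t))
    (hB : ∀ x ∈ B, ∀ y ∈ B, ((x.1, y.2) : s × t) ∈ B) :
    ∀ (n : ℕ) (m : (s × t) →₀ ℕ), m.support ⊆ B → mu r B m ≤ n →
    ∃ m₀ : (s × t) →₀ ℕ, Std m₀ ∧ F m₀ = F m ∧ (m₀ = m ∨ r m₀ m) ∧
      ∀ c : K, (monomial m c - monomial m₀ c : MvPolynomial (s × t) K)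
        ∈ Ideal.span (QuadSet (K := K) (s := s) (t := t)) := by
  haveI := hord
  intro n
  induction n with
  | zero =>
    intro m hs hmu
    by_cases h : Std m
    · refine ⟨m, h, rfl, Or.inl rfl, fun c => ?_⟩
      rw [sub_self]
      exact Ideal.zero_mem _
    · obtain ⟨m'', _, _, _, hlt, _⟩ := red_step (K := K) r hord hadd hsel B hB hs h
      omega
  | succ n ih =>
    intro m hs hmu
    by_cases h : Std m
    · refine ⟨m, h, rfl, Or.inl rfl, fun c => ?_⟩
      rw [sub_self]
      exact Ideal.zero_mem _
    · obtain ⟨m'', h1, h2, h3, h4, h5⟩ := red_step (K := K) r hord hadd hsel B hB hs h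
      obtain ⟨m₀, g1, g2, g3, g4⟩ := ih m'' h1 (by omega)
      refine ⟨m₀, g1, by rw [g2, h2], ?_, fun c => ?_⟩
      · right
        rcases g3 with rfl | hr4
        · exact h3
        · exact trans_of r hr4 h3
      · have heq : (monomial m c - monomial m₀ c : MvPolynomial (s × t) K)
            = (monomial m c - monomial m'' c) + (monomial m'' c - monomial m₀ c) := by ring
        rw [heq]
        exact add_mem (h5 c) (g4 c)

include hord hadd hsel in
lemma red (m : (s × t) →₀ ℕ) :
    ∃ m₀ : (s × t) →₀ ℕ, Std m₀ ∧ F m₀ = F m ∧ (m₀ = m ∨ r m₀ m) ∧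
      ∀ c : K, (monomial m c - monomial m₀ c : MvPolynomial (s × t) K)
        ∈ Ideal.span (QuadSet (K := K) (s := s) (t := t)) := by
  classical
  set B : Finset (s × t) := (m.support.image Prod.fst) ×ˢ (m.support.image Prod.snd) with hB
  have hBmix : ∀ x ∈ B, ∀ y ∈ B, ((x.1, y.2) : s × t) ∈ B := by
    intro x hx y hy
    rw [hB, Finset.mem_product] at hx hy ⊢
    exact ⟨hx.1, hy.2⟩
  have hsupp : m.support ⊆ B := by
    intro p hp
    rw [hB, Finset.mem_product]
    exact ⟨Finset.mem_image.2 ⟨p, hp, rfl⟩, Finset.mem_image.2 ⟨p, hp, rfl⟩⟩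
  exact red_aux r hord hadd hsel B hBmix (mu r B m) m hsupp le_rfl

end Reduction

lemma phi_rep (g : MvPolynomial (s × t) K) :
    phi g = ∑ m ∈ g.support, monomial (F m) (coeff m g) := by
  conv_lhs => rw [← MvPolynomial.support_sum_monomial_coeff g]
  rw [map_sum]
  exact Finset.sum_congr rfl fun m _ => phi_monomial m _

lemma support_binomial (a d : (s × t) →₀ ℕ) :
    (monomial a 1 - monomial d (1 : K)).support ⊆ {a, d} := by
  intro x hx
  rw [sub_eq_add_neg, ← map_neg] at hx
  rcases Finset.mem_union.1 (MvPolynomial.support_add hx) with h | h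
  · have := MvPolynomial.support_monomial_subset h
    simp only [Finset.mem_singleton] at this
    simp [this]
  · have := MvPolynomial.support_monomial_subset h
    simp only [Finset.mem_singleton] at this
    simp [this]

lemma pair_apply_le_one {u w : s × t} (h : u ≠ w) (v : s × t) :
    (Finsupp.single u 1 + Finsupp.single w 1 : (s × t) →₀ ℕ) v ≤ 1 := by
  classical
  rw [Finsupp.add_apply, Finsupp.single_apply, Finsupp.single_apply]
  by_cases h1 : u = v
  · by_cases h2 : w = v
    · exact absurd (h1.trans h2.symm) h
    · simp [h1, h2]
  · simp only [if_neg h1, zero_add]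
    split_ifs <;> simp

lemma pair_le {m : (s × t) →₀ ℕ} {p q : s × t}
    (hp : p ∈ m.support) (hq : q ∈ m.support) (hpne : p ≠ q) :
    Finsupp.single p 1 + Finsupp.single q 1 ≤ m := by
  refine Finsupp.le_def.2 fun x => ?_
  rw [Finsupp.add_apply]
  by_cases hxp : x = p
  · subst hxp
    rw [Finsupp.single_eq_same, Finsupp.single_eq_of_ne' (Ne.symm hpne)]
    exact Nat.one_le_iff_ne_zero.2 (Finsupp.mem_support_iff.1 hp)
  · by_cases hxq : x = q
    · subst hxq
      rw [Finsupp.single_eq_same, Finsupp.single_eq_of_ne' hpne]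
      exact Nat.one_le_iff_ne_zero.2 (Finsupp.mem_support_iff.1 hq)
    · rw [Finsupp.single_eq_of_ne' (Ne.symm hxp), Finsupp.single_eq_of_ne' (Ne.symm hxq)]
      exact Nat.zero_le _

section Main

variable (r : ((s × t) →₀ ℕ) → ((s × t) →₀ ℕ) → Prop)
  (hord : IsStrictTotalOrder ((s × t) →₀ ℕ) r)
  (hadd : ∀ a b c, r a b → r (a + c) (b + c))
  (hsel : ∀ (j₁ j₂ : s) (k₁ k₂ : t), j₁ < j₂ → k₁ < k₂ →
    r (Finsupp.single (j₂, k₁) 1 + Finsupp.single (j₁, k₂) 1)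
      (Finsupp.single (j₁, k₁) 1 + Finsupp.single (j₂, k₂) 1))

include hord hadd hsel in
lemma nf (f : MvPolynomial (s × t) K) :
    ∃ g : MvPolynomial (s × t) K, (∀ m ∈ g.support, Std m) ∧
      f - g ∈ Ideal.span (QuadSet (K := K) (s := s) (t := t)) := by
  induction f using MvPolynomial.induction_on' with
  | monomial u a =>
    obtain ⟨m₀, hstd, _, _, hmem⟩ := red (K := K) r hord hadd hsel u
    refine ⟨monomial m₀ a, ?_, hmem a⟩
    intro m hm
    have := MvPolynomial.support_monomial_subset hm
    rw [Finset.mem_singleton] at this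
    rwa [this]
  | add p q hp hq =>
    obtain ⟨gp, h1, h2⟩ := hp
    obtain ⟨gq, h3, h4⟩ := hq
    refine ⟨gp + gq, ?_, ?_⟩
    · intro m hm
      rcases Finset.mem_union.1 (MvPolynomial.support_add hm) with h | h
      · exact h1 m h
      · exact h3 m h
    · have heq : p + q - (gp + gq) = (p - gp) + (q - gq) := by ring
      rw [heq]
      exact add_mem h2 h4

lemma span_le_ker :
    Ideal.span (QuadSet (K := K) (s := s) (t := t))
      ≤ RingHom.ker (phi (K := K) (s := s) (t := t)).toRingHom := by
  rw [Ideal.span_le]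
  rintro f ⟨j₁, j₂, k₁, k₂, rfl⟩
  simp only [SetLike.mem_coe, RingHom.mem_ker]
  exact quad_ker j₁ j₂ k₁ k₂

include hord hadd hsel in
lemma ker_le_span :
    RingHom.ker (phi (K := K) (s := s) (t := t)).toRingHom
      ≤ Ideal.span (QuadSet (K := K) (s := s) (t := t)) := by
  intro f hf
  obtain ⟨g, hgstd, hgmem⟩ := nf r hord hadd hsel f
  have h1 : phi (f - g) = 0 := RingHom.mem_ker.1 (span_le_ker hgmem)
  have h2 : phi f = 0 := RingHom.mem_ker.1 hf
  rw [map_sub, h2, zero_sub, neg_eq_zero] at h1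
  have hg0 : g = 0 := eq_zero_of_std hgstd h1
  have : f = f - g := by rw [hg0, sub_zero]
  rw [this]
  exact hgmem

include hord hadd hsel in
lemma lead_nonstd {f : MvPolynomial (s × t) K} (hf : phi f = 0) {m : (s × t) →₀ ℕ}
    (hlm : IsLeadMon r f m) : ¬ Std m := by
  haveI := hord
  intro hstd
  obtain ⟨hm_supp, hmax⟩ := hlm
  have hc := congrArg (coeff (F m)) (phi_rep f)
  rw [hf, coeff_zero, MvPolynomial.coeff_sum] at hc
  by_cases hex : ∃ m' ∈ f.support, m' ≠ m ∧ F m' = F m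
  · obtain ⟨m', hm'supp, hm'ne, hFm'⟩ := hex
    obtain ⟨m₀, hstd₀, hF₀, hcase, _⟩ := red (K := K) r hord hadd hsel m'
    have hm₀ : m₀ = m := F_inj (m₀.sum fun _ n => n) m₀ m rfl hstd₀ hstd (by rw [hF₀, hFm'])
    subst hm₀
    rcases hcase with rfl | hrm
    · exact hm'ne rfl
    · exact (irrefl_of r m₀) (trans_of r hrm (hmax m' hm'supp hm'ne))
  · push_neg at hex
    have hsum : ∑ mm ∈ f.support, coeff (F m) (monomial (F mm) (coeff mm f)) = coeff m f := by
      rw [Finset.sum_eq_single m]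
      · rw [MvPolynomial.coeff_monomial, if_pos rfl]
      · intro b hb hbne
        rw [MvPolynomial.coeff_monomial, if_neg (hex b hb hbne)]
      · intro h; exact absurd hm_supp h
    rw [hsum] at hc
    exact (MvPolynomial.mem_support_iff.1 hm_supp) hc.symm

end Main

end Stmt7Aux


/-- The toric ideal of the Segre embedding `z_{jk} ↦ x_j y_k` is generated by the 2×2 minors;
moreover the minors form a Gröbner basis with respect to any monomial order selecting
`z_{j₁k₁} z_{j₂k₂}` (with `j₁ < j₂`, `k₁ < k₂`) as leading terms, and the initial ideal is
squarefree. -/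
theorem stmt7 {K : Type} [Field K] {s t : Type} [LinearOrder s] [LinearOrder t]
    (r : ((s × t) →₀ ℕ) → ((s × t) →₀ ℕ) → Prop)
    (hord : IsStrictTotalOrder ((s × t) →₀ ℕ) r)
    (hadd : ∀ a b c, r a b → r (a + c) (b + c))
    (hzero : ∀ a, a ≠ 0 → r 0 a)
    (hsel : ∀ (j₁ j₂ : s) (k₁ k₂ : t), j₁ < j₂ → k₁ < k₂ →
      r (Finsupp.single (j₂, k₁) 1 + Finsupp.single (j₁, k₂) 1)
        (Finsupp.single (j₁, k₁) 1 + Finsupp.single (j₂, k₂) 1)) :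
    letI φ : MvPolynomial (s × t) K →ₐ[K] MvPolynomial (s ⊕ t) K :=
      MvPolynomial.aeval (fun x : s × t => X (Sum.inl x.1) * X (Sum.inr x.2))
    letI I : Ideal (MvPolynomial (s × t) K) := RingHom.ker φ.toRingHom
    letI Quad : Set (MvPolynomial (s × t) K) :=
      {f | ∃ (j₁ j₂ : s) (k₁ k₂ : t),
        f = X (j₁, k₁) * X (j₂, k₂) - X (j₂, k₁) * X (j₁, k₂)}
    -- generation
    I = Ideal.span Quad ∧
    -- Gröbner basis property: the leading monomials of the minors generate the initial ideal
    Ideal.span {g : MvPolynomial (s × t) K |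
        ∃ f ∈ Quad, f ≠ 0 ∧ ∃ m, IsLeadMon r f m ∧ g = monomial m 1}
      = Ideal.span {g : MvPolynomial (s × t) K |
        ∃ f ∈ I, f ≠ 0 ∧ ∃ m, IsLeadMon r f m ∧ g = monomial m 1} ∧
    -- squarefree initial ideal
    (∀ f ∈ Quad, ∀ m, IsLeadMon r f m → ∀ v, m v ≤ 1) := by
  classical
  haveI := hord
  refine ⟨?_, ?_, ?_⟩
  · -- generation
    exact le_antisymm (Stmt7Aux.ker_le_span r hord hadd hsel) Stmt7Aux.span_le_ker
  · -- Gröbner basis property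
    apply le_antisymm
    · apply Ideal.span_mono
      rintro g ⟨f, hfQ, hfne, m, hlm, rfl⟩
      refine ⟨f, ?_, hfne, m, hlm, rfl⟩
      obtain ⟨j₁, j₂, k₁, k₂, rfl⟩ := hfQ
      exact RingHom.mem_ker.2 (Stmt7Aux.quad_ker j₁ j₂ k₁ k₂)
    · rw [Ideal.span_le]
      rintro g ⟨f, hfI, hfne, m, hlm, rfl⟩
      simp only [SetLike.mem_coe]
      have hnstd : ¬ Stmt7Aux.Std m :=
        Stmt7Aux.lead_nonstd r hord hadd hsel (RingHom.mem_ker.1 hfI) hlm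
      rw [Stmt7Aux.Std] at hnstd
      push_neg at hnstd
      obtain ⟨p, hp, q, hq, h1, h2⟩ := hnstd
      have hpne : p ≠ q := fun h => absurd (h ▸ h1) (lt_irrefl _)
      have ha : Finsupp.single p 1 + Finsupp.single q 1 ≤ m := Stmt7Aux.pair_le hp hq hpne
      have e1 : ((q.1, p.2) : s × t) ≠ p := fun h' => (ne_of_lt h1) (congrArg Prod.fst h').symm
      have e2 : ((p.1, q.2) : s × t) ≠ p := fun h' => (ne_of_lt h2) (congrArg Prod.snd h').symm
      have hap : (Finsupp.single p 1 + Finsupp.single q 1 : (s × t) →₀ ℕ) p = 1 := by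
        rw [Finsupp.add_apply, Finsupp.single_eq_same, Finsupp.single_eq_of_ne' (Ne.symm hpne)]
        rfl
      have hdp : (Finsupp.single ((q.1, p.2) : s × t) 1
          + Finsupp.single ((p.1, q.2) : s × t) 1 : (s × t) →₀ ℕ) p = 0 := by
        rw [Finsupp.add_apply, Finsupp.single_eq_of_ne' e1, Finsupp.single_eq_of_ne' e2]
        rfl
      have handd : (Finsupp.single ((q.1, p.2) : s × t) 1
            + Finsupp.single ((p.1, q.2) : s × t) 1 : (s × t) →₀ ℕ)
          ≠ Finsupp.single p 1 + Finsupp.single q 1 := by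
        intro h
        rw [Finsupp.ext_iff] at h
        have := h p
        rw [hap, hdp] at this
        exact zero_ne_one this
      have hc1 : coeff (Finsupp.single p 1 + Finsupp.single q 1)
          ((monomial (Finsupp.single p 1 + Finsupp.single q 1) 1
            - monomial (Finsupp.single ((q.1, p.2) : s × t) 1
              + Finsupp.single ((p.1, q.2) : s × t) 1) 1 : MvPolynomial (s × t) K)) = 1 := by
        rw [MvPolynomial.coeff_sub, MvPolynomial.coeff_monomial, if_pos rfl,
          MvPolynomial.coeff_monomial, if_neg handd, sub_zero]
      have hf₀ne : (monomial (Finsupp.single p 1 + Finsupp.single q 1) 1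
          - monomial (Finsupp.single ((q.1, p.2) : s × t) 1
            + Finsupp.single ((p.1, q.2) : s × t) 1) 1 : MvPolynomial (s × t) K) ≠ 0 := by
        intro h
        rw [h, MvPolynomial.coeff_zero] at hc1
        exact zero_ne_one hc1
      have hlead : IsLeadMon r (monomial (Finsupp.single p 1 + Finsupp.single q 1) 1
          - monomial (Finsupp.single ((q.1, p.2) : s × t) 1
            + Finsupp.single ((p.1, q.2) : s × t) 1) 1 : MvPolynomial (s × t) K)
          (Finsupp.single p 1 + Finsupp.single q 1) := by
        constructor
        · exact MvPolynomial.mem_support_iff.2 (by rw [hc1]; exact one_ne_zero)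
        · intro m' hm' hm'ne
          have hmem := Stmt7Aux.support_binomial _ _ hm'
          rcases Finset.mem_insert.1 hmem with rfl | h'
          · exact absurd rfl hm'ne
          · rw [Finset.mem_singleton] at h'
            subst h'
            exact hsel p.1 q.1 p.2 q.2 h1 h2
      have hmono : (monomial m 1 : MvPolynomial (s × t) K)
          = monomial (m - (Finsupp.single p 1 + Finsupp.single q 1)) 1
            * monomial (Finsupp.single p 1 + Finsupp.single q 1) 1 := by
        rw [monomial_mul, one_mul, tsub_add_cancel_of_le ha]
      rw [hmono]
      refine Ideal.mul_mem_left _ _ (Ideal.subset_span ?_)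
      exact ⟨_, ⟨p.1, q.1, p.2, q.2, by rw [Stmt7Aux.X_mul_X, Stmt7Aux.X_mul_X]⟩,
        hf₀ne, _, hlead, rfl⟩
  · -- squarefree
    rintro f ⟨j₁, j₂, k₁, k₂, rfl⟩ m hlm v
    by_cases hj : j₁ = j₂
    · subst hj
      obtain ⟨hm, _⟩ := hlm
      rw [sub_self] at hm
      simp at hm
    · by_cases hk : k₁ = k₂
      · subst hk
        obtain ⟨hm, _⟩ := hlm
        have h0 : (X (j₁, k₁) * X (j₂, k₁) - X (j₂, k₁) * X (j₁, k₁)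
            : MvPolynomial (s × t) K) = 0 := by ring
        rw [h0] at hm
        simp at hm
      · have hne1 : ((j₁, k₁) : s × t) ≠ (j₂, k₂) := fun h => hj (congrArg Prod.fst h)
        have hne2 : ((j₂, k₁) : s × t) ≠ (j₁, k₂) := fun h => hj (congrArg Prod.fst h).symm
        obtain ⟨hm, _⟩ := hlm
        rw [show (X (j₁, k₁) * X (j₂, k₂) - X (j₂, k₁) * X (j₁, k₂) : MvPolynomial (s × t) K)
            = monomial (Finsupp.single ((j₁, k₁) : s × t) 1 + Finsupp.single ((j₂, k₂) : s × t) 1) 1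
              - monomial (Finsupp.single ((j₂, k₁) : s × t) 1
                + Finsupp.single ((j₁, k₂) : s × t) 1) 1 from by
          rw [Stmt7Aux.X_mul_X, Stmt7Aux.X_mul_X]] at hm
        have hmem := Stmt7Aux.support_binomial _ _ hm
        rcases Finset.mem_insert.1 hmem with rfl | h'
        · exact Stmt7Aux.pair_apply_le_one hne1 v
        · rw [Finset.mem_singleton] at h'
          subst h'
          exact Stmt7Aux.pair_apply_le_one hne2 v
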